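/- arXiv:1303.7243 — 6 statements merged into one kernel-verified Lean document; each statement's English description precedes it below -/
import Mathlib

section
/- Let f: S² → S² be a quasiregular map of degree d ≥ 2. If z ∈ S² \ E(f), where E(f) is the set of points with finite backward orbit, then the sixth preimage set f^{−6}(z) contains at least 3 points. -/
/-- Let `f` be a (quasiregular) degree-`d ≥ 2` self-map of the Riemann sphere `S² = ℂ ∪ {∞}`,
with local index function `i`, finitely many critical points whose multiplicities sum to
`2d−2` (Riemann–Hurwitz), every fiber finite with indices summing to `d`, and such that a
point with a single preimage has that preimage of maximal local index `d`. If `z` is not in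
the exceptional set (its backward orbit is infinite), then `f^{-6}(z)` has at least 3 points. -/
theorem stmt3 (f : OnePoint ℂ → OnePoint ℂ) (hf : Continuous f)
    (d : ℕ) (hd : 2 ≤ d)
    (i : OnePoint ℂ → ℕ)
    (hi1 : ∀ x, 1 ≤ i x)
    (hBfin : {x | 2 ≤ i x}.Finite)
    (hRH : ∑ x ∈ hBfin.toFinset, (i x - 1) = 2 * d - 2)
    (hfiber : ∀ a, (f ⁻¹' {a}).Finite)
    (hdeg : ∀ a, ∑ x ∈ (hfiber a).toFinset, i x = d)
    (hmax : ∀ a b, f ⁻¹' {a} = {b} → i b = d)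
    (z : OnePoint ℂ)
    (hz : ¬ (⋃ k, f^[k] ⁻¹' {z}).Finite) :
    3 ≤ (f^[6] ⁻¹' {z}).ncard := by
  by_contra hcon
  push_neg at hcon
  set S : ℕ → Set (OnePoint ℂ) := fun k => f^[k] ⁻¹' {z} with hS
  -- every fiber is nonempty
  have hfibne : ∀ a : OnePoint ℂ, (f ⁻¹' {a}).Nonempty := by
    intro a
    rw [Set.nonempty_iff_ne_empty]
    intro h
    have h0 : (hfiber a).toFinset = ∅ := by rwa [Set.Finite.toFinset_eq_empty]
    have := hdeg a
    rw [h0, Finset.sum_empty] at this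
    omega
  have hstep : ∀ k, S (k + 1) = f ⁻¹' S k := by
    intro k
    ext x
    simp [hS, Function.iterate_succ_apply]
  have hSfin : ∀ k, (S k).Finite := by
    intro k
    induction k with
    | zero => simpa [hS] using Set.finite_singleton z
    | succ k ih =>
      rw [hstep k]
      have hpre : f ⁻¹' S k = ⋃ a ∈ S k, f ⁻¹' {a} := by ext x; simp
      rw [hpre]
      exact Set.Finite.biUnion ih (fun a _ => hfiber a)
  have hSne : ∀ k, (S k).Nonempty := by
    intro k
    induction k with
    | zero => exact ⟨z, by simp [hS]⟩
    | succ k ih =>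
      obtain ⟨x, hx⟩ := ih
      obtain ⟨y, hy⟩ := hfibne x
      refine ⟨y, ?_⟩
      rw [hstep k]
      simp only [Set.mem_preimage, Set.mem_singleton_iff] at hy ⊢
      rw [hy]; exact hx
  have himg : ∀ k, f '' S (k + 1) = S k := by
    intro k
    rw [hstep k]
    refine subset_antisymm (Set.image_preimage_subset f _) ?_
    intro a ha
    obtain ⟨x, hx⟩ := hfibne a
    simp only [Set.mem_preimage, Set.mem_singleton_iff] at hx
    exact ⟨x, by simp [Set.mem_preimage, hx, ha], hx⟩
  have hmono : ∀ k, (S k).ncard ≤ (S (k + 1)).ncard := by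
    intro k
    rw [← himg k]
    exact Set.ncard_image_le (hSfin (k + 1))
  -- the set of maximal critical points
  set M : Set (OnePoint ℂ) := {x | i x = d} with hM
  have hMfin : M.Finite := hBfin.subset (fun x hx => by simp only [hM, Set.mem_setOf_eq] at hx ⊢; omega)
  have hMcard : M.ncard ≤ 2 := by
    have hsubB : hMfin.toFinset ⊆ hBfin.toFinset := by
      intro x hx
      simp only [Set.Finite.mem_toFinset, hM, Set.mem_setOf_eq] at hx ⊢
      omega
    have h1 : ∑ x ∈ hMfin.toFinset, (i x - 1) ≤ 2 * d - 2 := by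
      rw [← hRH]
      exact Finset.sum_le_sum_of_subset hsubB
    have h2 : ∑ x ∈ hMfin.toFinset, (i x - 1) = hMfin.toFinset.card * (d - 1) := by
      rw [Finset.sum_congr rfl (fun x hx => ?_), Finset.sum_const, smul_eq_mul]
      simp only [Set.Finite.mem_toFinset, hM, Set.mem_setOf_eq] at hx
      rw [hx]
    rw [h2] at h1
    have h3 : hMfin.toFinset.card * (d - 1) ≤ 2 * (d - 1) := by omega
    have h4 : hMfin.toFinset.card ≤ 2 := Nat.le_of_mul_le_mul_right h3 (by omega)
    rwa [Set.ncard_eq_toFinset_card M hMfin]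
  -- if the fiber count doesn't grow, all new preimages are maximal critical points
  have hsubM : ∀ k, (S (k + 1)).ncard ≤ (S k).ncard → S (k + 1) ⊆ M := by
    intro k hle x hx
    have hinj : Set.InjOn f (S (k + 1)) := by
      apply Set.injOn_of_ncard_image_eq _ (hSfin (k + 1))
      rw [himg k]
      exact le_antisymm (hmono k) hle
    have hfx : f x ∈ S k := by rw [← himg k]; exact ⟨x, hx, rfl⟩
    have hfib : f ⁻¹' {f x} = {x} := by
      refine subset_antisymm (fun y hy => ?_) (fun y hy => by simp_all)
      simp only [Set.mem_preimage, Set.mem_singleton_iff] at hy ⊢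
      have hyS : y ∈ S (k + 1) := by
        rw [hstep k]
        simp only [Set.mem_preimage, Set.mem_singleton_iff]
        rw [hy]; exact hfx
      exact hinj hyS hx hy
    exact hmax (f x) x hfib
  -- cardinalities of the first seven preimage sets
  have hn0 : (S 0).ncard = 1 := by
    have : S 0 = {z} := by ext x; simp [hS]
    rw [this, Set.ncard_singleton]
  have hn6 : (S 6).ncard ≤ 2 := Nat.lt_succ_iff.mp hcon
  have h01 : (S 0).ncard ≤ (S 1).ncard := hmono 0
  have h12 : (S 1).ncard ≤ (S 2).ncard := hmono 1
  have h23 : (S 2).ncard ≤ (S 3).ncard := hmono 2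
  have h34 : (S 3).ncard ≤ (S 4).ncard := hmono 3
  have h45 : (S 4).ncard ≤ (S 5).ncard := hmono 4
  have h56 : (S 5).ncard ≤ (S 6).ncard := hmono 5
  -- find a window of length 3 with constant cardinality
  obtain ⟨a, ha6, hw⟩ : ∃ a, a + 3 ≤ 6 ∧ (S a).ncard = (S (a + 3)).ncard := by
    by_cases h3 : (S 3).ncard ≤ 1
    · exact ⟨0, by omega, show (S 0).ncard = (S 3).ncard by omega⟩
    · exact ⟨3, by omega, show (S 3).ncard = (S 6).ncard by omega⟩
  have hma : (S a).ncard ≤ (S (a + 1)).ncard := hmono a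
  have hma1 : (S (a + 1)).ncard ≤ (S (a + 2)).ncard := hmono (a + 1)
  have hma2 : (S (a + 2)).ncard ≤ (S (a + 3)).ncard := hmono (a + 2)
  have heq1 : (S (a + 1)).ncard = (S a).ncard := by omega
  have heq2 : (S (a + 2)).ncard = (S (a + 1)).ncard := by omega
  have heq3 : (S (a + 3)).ncard = (S (a + 2)).ncard := by omega
  have hsub1 : S (a + 1) ⊆ M := hsubM a (by omega)
  have hsub2 : S (a + 2) ⊆ M :=
    hsubM (a + 1) (show (S (a + 2)).ncard ≤ (S (a + 1)).ncard by omega)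
  have hsub3 : S (a + 3) ⊆ M :=
    hsubM (a + 2) (show (S (a + 3)).ncard ≤ (S (a + 2)).ncard by omega)
  have hpos1 : 0 < (S (a + 1)).ncard := (Set.ncard_pos (hSfin (a + 1))).mpr (hSne (a + 1))
  -- two of the three windowed sets are equal
  obtain ⟨j, l, hjl, hSeq⟩ : ∃ j l, j < l ∧ S j = S l := by
    by_cases hc2 : 2 ≤ (S (a + 1)).ncard
    · have e1 : S (a + 1) = M :=
        Set.eq_of_subset_of_ncard_le hsub1 (by omega) hMfin
      have e2 : S (a + 2) = M :=
        Set.eq_of_subset_of_ncard_le hsub2 (by omega) hMfin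
      exact ⟨a + 1, a + 2, by omega, by rw [e1, e2]⟩
    · have hc1 : (S (a + 1)).ncard = 1 := by omega
      obtain ⟨x1, hx1⟩ := Set.ncard_eq_one.mp hc1
      obtain ⟨x2, hx2⟩ := Set.ncard_eq_one.mp (by omega : (S (a + 2)).ncard = 1)
      obtain ⟨x3, hx3⟩ := Set.ncard_eq_one.mp (by omega : (S (a + 3)).ncard = 1)
      have hm1 : x1 ∈ M := hsub1 (hx1 ▸ rfl)
      have hm2 : x2 ∈ M := hsub2 (hx2 ▸ rfl)
      have hm3 : x3 ∈ M := hsub3 (hx3 ▸ rfl)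
      by_cases h12' : x1 = x2
      · exact ⟨a + 1, a + 2, by omega, by rw [hx1, hx2, h12']⟩
      by_cases h13' : x1 = x3
      · exact ⟨a + 1, a + 3, by omega, by rw [hx1, hx3, h13']⟩
      by_cases h23' : x2 = x3
      · exact ⟨a + 2, a + 3, by omega, by rw [hx2, hx3, h23']⟩
      · exfalso
        have hsub : ({x1, x2, x3} : Set (OnePoint ℂ)) ⊆ M := by
          intro y hy
          simp only [Set.mem_insert_iff, Set.mem_singleton_iff] at hy
          rcases hy with rfl | rfl | rfl <;> assumption
        have h3' : ({x1, x2, x3} : Set (OnePoint ℂ)).ncard = 3 :=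
          Set.ncard_eq_three.mpr ⟨x1, x2, x3, h12', h13', h23', rfl⟩
        have := Set.ncard_le_ncard hsub hMfin
        omega
  -- periodicity of the backward orbit implies finiteness, contradicting hz
  exfalso
  apply hz
  have hshift : ∀ t m, S (t + m) = f^[m] ⁻¹' S t := by
    intro t m
    ext x
    simp [hS, Function.iterate_add_apply]
  have hper : ∀ k, j ≤ k → S (k + (l - j)) = S k := by
    intro k hk
    obtain ⟨m, rfl⟩ : ∃ m, k = j + m := ⟨k - j, by omega⟩
    have h1 : j + m + (l - j) = l + m := by omega
    rw [h1, hshift l m, ← hSeq, ← hshift j m]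
  have hcover : ∀ k, S k ⊆ ⋃ m ∈ Finset.range l, S m := by
    intro k
    induction k using Nat.strong_induction_on with
    | _ k ih =>
      by_cases hk : k < l
      · exact Set.subset_biUnion_of_mem (Finset.mem_range.mpr hk)
      · have hk' : k = k - (l - j) + (l - j) := by omega
        have heq := hper (k - (l - j)) (by omega)
        rw [← hk'] at heq
        exact heq ▸ ih (k - (l - j)) (by omega)
  exact Set.Finite.subset
    (Set.Finite.biUnion (Finset.range l).finite_toSet (fun m _ => hSfin m))
    (Set.iUnion_subset hcover)
end

section
/- Let f: S² → S² be a quasiregular map. Then there exists η > 0 such that for every simply connected domain U ⊂ S² with chordal diameter less than η, every connected component of f^{−1}(U) is simply connected. -/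
open Metric Set RealInnerProductSpace

private abbrev E3 : Type := EuclideanSpace ℝ (Fin 3)
private abbrev S2 : Type := Metric.sphere (0 : E3) 1

private lemma core_arith {a c t m : ℝ} (ha1 : -1 ≤ a) (ha2 : a ≤ 1) (hc1 : -1 ≤ c) (hca : c ≤ a)
    (ht0 : 0 ≤ t) (ht1 : t ≤ 1) (hm0 : 0 < m) (hm1 : m ≤ 1)
    (hm2 : m^2 = (1-t)^2 + t^2 + 2*(t*(1-t))*a) :
    c * m ≤ (1-t)*a + t := by
  rcases le_or_gt 0 ((1-t)*a + t) with hN | hN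
  · rcases le_or_gt c 0 with hc | hc
    · nlinarith
    · nlinarith [mul_le_mul_of_nonneg_left hm1 hc.le]
  · have ht1' : t < 1 := by nlinarith
    have hA : a < 0 := by nlinarith
    have hc0 : c < 0 := lt_of_le_of_lt hca hA
    have key : ((1-t)*a + t)^2 ≤ c^2 * m^2 := by
      have h1 : 0 ≤ (1-t)^2 * (c^2 - a^2) := by
        have := mul_nonneg (sub_nonneg.2 hca) (neg_nonneg.2 (by linarith : a + c ≤ 0))
        nlinarith [sq_nonneg (1-t)]
      have h2 : t + 2*(1-t)*a ≤ (1-t)*a + t := by nlinarith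
      have h3 : 0 ≤ 1 - c^2 := by nlinarith
      have h4 : 0 ≤ -t * (t + 2*(1-t)*a) := by nlinarith
      nlinarith [mul_nonneg h3 h4]
    nlinarith [mul_pos (neg_pos.2 hc0) hm0]


private lemma norm_one_of_S2 (z : S2) : ‖(z : E3)‖ = 1 := by
  have := z.2; rwa [mem_sphere_zero_iff_norm] at this

private lemma cap_joinedIn (u z : S2) (c : ℝ) (hc1 : -1 ≤ c)
    (ha : -1 < ⟪(z : E3), (u : E3)⟫) (hz : c ≤ ⟪(z : E3), (u : E3)⟫) :
    JoinedIn {w : S2 | c ≤ ⟪(w : E3), (u : E3)⟫} z u := by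
  set a : ℝ := ⟪(z : E3), (u : E3)⟫ with hadef
  have hzn : ‖(z : E3)‖ = 1 := norm_one_of_S2 z
  have hun : ‖(u : E3)‖ = 1 := norm_one_of_S2 u
  have ha2 : a ≤ 1 := by
    have := abs_real_inner_le_norm (z : E3) (u : E3)
    rw [hzn, hun] at this; simp at this; exact (abs_le.1 this).2
  set g : ℝ → E3 := fun t => (1-t) • (z : E3) + t • (u : E3) with hgdef
  have hgcont : Continuous g := by fun_prop
  have hnormsq : ∀ t : ℝ, 0 ≤ t → t ≤ 1 → ‖g t‖^2 = (1-t)^2 + t^2 + 2*(t*(1-t))*a := by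
    intro t ht0 ht1
    have := norm_add_sq_real ((1-t) • (z : E3)) (t • (u : E3))
    rw [norm_smul, norm_smul, real_inner_smul_left, real_inner_smul_right] at this
    rw [hgdef]; simp only []
    rw [this, hzn, hun]
    rw [Real.norm_of_nonneg (by linarith : (0:ℝ) ≤ 1 - t), Real.norm_of_nonneg ht0]
    ring
  have hpos : ∀ t : ℝ, 0 ≤ t → t ≤ 1 → 0 < ‖g t‖ := by
    intro t ht0 ht1
    have h2 := hnormsq t ht0 ht1
    have h14 : t*(1-t) ≤ 1/4 := by nlinarith [sq_nonneg (1-2*t)]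
    have : 0 < ‖g t‖^2 := by
      nlinarith [mul_le_mul_of_nonneg_right h14 (by linarith : (0:ℝ) ≤ 1 - a)]
    have hge : 0 ≤ ‖g t‖ := norm_nonneg _
    nlinarith
  have hle1 : ∀ t : ℝ, 0 ≤ t → t ≤ 1 → ‖g t‖ ≤ 1 := by
    intro t ht0 ht1
    have h2 := hnormsq t ht0 ht1
    have hge : 0 ≤ ‖g t‖ := norm_nonneg _
    nlinarith [mul_nonneg (mul_nonneg ht0 (by linarith : (0:ℝ) ≤ 1-t)) (by linarith : (0:ℝ) ≤ 1 - a)]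
  have hinner : ∀ t : ℝ, ⟪g t, (u : E3)⟫ = (1-t)*a + t := by
    intro t
    rw [hgdef]
    simp only []
    rw [inner_add_left, real_inner_smul_left, real_inner_smul_left,
      real_inner_self_eq_norm_sq, hun, ← hadef]
    ring
  have hcont2 : Continuous fun t : unitInterval => ‖g (t : ℝ)‖⁻¹ • g (t : ℝ) := by
    apply Continuous.fun_smul
    · exact ((hgcont.comp continuous_subtype_val).norm.inv₀
        (fun t => (hpos t t.2.1 t.2.2).ne'))
    · exact hgcont.comp continuous_subtype_val
  have hmem : ∀ t : unitInterval, ‖g (t : ℝ)‖⁻¹ • g (t : ℝ) ∈ Metric.sphere (0 : E3) 1 := by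
    intro t
    rw [mem_sphere_zero_iff_norm, norm_smul, norm_inv, norm_norm]
    exact inv_mul_cancel₀ (hpos t t.2.1 t.2.2).ne'
  let γ : Path z u :=
    { toFun := fun t => ⟨‖g (t : ℝ)‖⁻¹ • g (t : ℝ), hmem t⟩
      continuous_toFun := hcont2.subtype_mk hmem
      source' := by
        apply Subtype.ext
        show ‖g ((0 : unitInterval) : ℝ)‖⁻¹ • g ((0 : unitInterval) : ℝ) = (z : E3)
        have : g ((0 : unitInterval) : ℝ) = (z : E3) := by rw [hgdef]; simp
        rw [this, hzn]; simp
      target' := by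
        apply Subtype.ext
        show ‖g ((1 : unitInterval) : ℝ)‖⁻¹ • g ((1 : unitInterval) : ℝ) = (u : E3)
        have : g ((1 : unitInterval) : ℝ) = (u : E3) := by rw [hgdef]; simp
        rw [this, hun]; simp }
  refine ⟨γ, fun t => ?_⟩
  show c ≤ ⟪(((γ t) : S2) : E3), (u : E3)⟫
  have hγ : (((γ t) : S2) : E3) = ‖g (t : ℝ)‖⁻¹ • g (t : ℝ) := rfl
  rw [hγ, real_inner_smul_left, hinner]
  have hm := hpos t t.2.1 t.2.2
  rw [inv_mul_eq_div, le_div_iff₀ hm]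
  exact core_arith (by linarith) ha2 hc1 hz t.2.1 t.2.2 hm (hle1 t t.2.1 t.2.2)
    (hnormsq t t.2.1 t.2.2)

private lemma dist_sq_S2 (z w : S2) : dist z w ^ 2 = 2 - 2 * ⟪(z : E3), (w : E3)⟫ := by
  rw [Subtype.dist_eq, dist_eq_norm, norm_sub_sq_real, norm_one_of_S2, norm_one_of_S2]
  ring

private lemma cap_isConnected (x₀ : S2) {r : ℝ} (hr : 0 < r) (hr2 : r ≤ 2) :
    IsConnected {z : S2 | r ≤ dist z x₀} := by
  set u : S2 := ⟨-(x₀ : E3), by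
    rw [mem_sphere_zero_iff_norm, norm_neg]; exact norm_one_of_S2 x₀⟩ with hudef
  have hinneg : ∀ z : S2, ⟪(z : E3), (u : E3)⟫ = -⟪(z : E3), (x₀ : E3)⟫ := by
    intro z
    show ⟪(z : E3), -(x₀ : E3)⟫ = _
    rw [inner_neg_right]
  obtain ⟨c, hcdef⟩ : ∃ c : ℝ, c = r^2/2 - 1 := ⟨_, rfl⟩
  have hc1 : -1 ≤ c := by nlinarith [sq_nonneg r]
  have hcm1 : -1 < c := by nlinarith [pow_pos hr 2]
  have hset : {z : S2 | r ≤ dist z x₀} = {w : S2 | c ≤ ⟪(w : E3), (u : E3)⟫} := by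
    ext z
    simp only [mem_setOf_eq, hinneg z]
    have hd2 := dist_sq_S2 z x₀
    have hdn : 0 ≤ dist z x₀ := dist_nonneg
    constructor
    · intro h
      nlinarith [mul_self_le_mul_self hr.le h]
    · intro h
      by_contra hlt
      push_neg at hlt
      nlinarith [mul_pos (by linarith : (0:ℝ) < r - dist z x₀) (by linarith : (0:ℝ) < r + dist z x₀)]
  rw [hset]
  have humem : c ≤ ⟪(u : E3), (u : E3)⟫ := by
    rw [real_inner_self_eq_norm_sq, norm_one_of_S2]; nlinarith [mul_self_le_mul_self hr.le hr2]
  refine ⟨⟨u, humem⟩, ?_⟩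
  have : IsPathConnected {w : S2 | c ≤ ⟪(w : E3), (u : E3)⟫} := by
    refine ⟨u, humem, fun {z} hz => ?_⟩
    exact (cap_joinedIn u z c hc1 (lt_of_lt_of_le hcm1 hz) hz).symm
  exact this.isConnected.isPreconnected


private lemma exists_sep {F : Set S2} (hF : F.Finite) :
    ∃ ε > (0:ℝ), ∀ x ∈ F, ∀ x' ∈ F, x ≠ x' → ε ≤ dist x x' := by
  set P := (F ×ˢ F) ∩ {p : S2 × S2 | p.1 ≠ p.2} with hP
  have hPfin : P.Finite := (hF.prod hF).inter_of_left _
  rcases P.eq_empty_or_nonempty with hPe | hPne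
  · refine ⟨1, one_pos, fun x hx x' hx' hne => ?_⟩
    have hx2 : (x, x') ∈ P := ⟨⟨hx, hx'⟩, hne⟩
    rw [hPe] at hx2
    exact absurd hx2 (notMem_empty _)
  · obtain ⟨p₀, hp₀, hmin⟩ := Set.exists_min_image P (fun p => dist p.1 p.2) hPfin hPne
    exact ⟨dist p₀.1 p₀.2, dist_pos.2 hp₀.2, fun x hx x' hx' hne =>
      hmin (x, x') ⟨⟨hx, hx'⟩, hne⟩⟩

private lemma subset_single_of_disjoint_opens {s : Set S2} (hs : IsPreconnected s)
    (hne : s.Nonempty) (I : Finset S2) (b : S2 → Set S2)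
    (hopen : ∀ i, IsOpen (b i))
    (hpair : ∀ i ∈ I, ∀ j ∈ I, i ≠ j → Disjoint (b i) (b j))
    (hsub : s ⊆ ⋃ i ∈ I, b i) : ∃ i ∈ I, s ⊆ b i := by
  classical
  induction I using Finset.induction_on with
  | empty =>
    simp only [Finset.notMem_empty, iUnion_of_empty, iUnion_empty, subset_empty_iff] at hsub
    obtain ⟨z, hz⟩ := hne
    rw [hsub] at hz
    exact absurd hz (notMem_empty _)
  | @insert i₀ I' hni ih =>
    rw [Finset.set_biUnion_insert] at hsub
    by_cases hmeet : (s ∩ b i₀).Nonempty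
    · refine ⟨i₀, Finset.mem_insert_self _ _, ?_⟩
      refine IsPreconnected.subset_left_of_subset_union (hopen i₀)
        (isOpen_biUnion fun i _ => hopen i) ?_ hsub hmeet hs
      rw [Set.disjoint_iUnion₂_right]
      intro i hi
      exact hpair i₀ (Finset.mem_insert_self _ _) i
        (Finset.mem_insert_of_mem hi) (fun h => hni (h ▸ hi))
    · have hsub' : s ⊆ ⋃ i ∈ I', b i := by
        intro z hz
        rcases hsub hz with hz0 | hz1
        · exact absurd (⟨z, hz, hz0⟩ : (s ∩ b i₀).Nonempty) hmeet
        · exact hz1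
      obtain ⟨i, hi, hsi⟩ := ih (fun i hi => fun j hj hij =>
        hpair i (Finset.mem_insert_of_mem hi) j (Finset.mem_insert_of_mem hj) hij) hsub'
      exact ⟨i, Finset.mem_insert_of_mem hi, hsi⟩

private lemma sphere_nonempty' : Nonempty S2 :=
  ⟨⟨EuclideanSpace.single 0 1, by
    rw [mem_sphere_zero_iff_norm, EuclideanSpace.norm_single]; norm_num⟩⟩

private lemma step1 (f : S2 → S2) (hf : Continuous f) (hdisc : ∀ y, (f ⁻¹' {y}).Finite)
    {ρ : ℝ} (hρ : 0 < ρ) :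
    ∃ η > (0:ℝ), ∀ y : S2, ∀ C : Set S2, IsPreconnected C → (∀ z ∈ C, dist (f z) y ≤ η) →
      ∀ p ∈ C, ∀ q ∈ C, dist p q ≤ ρ := by
  have key : ∀ y : S2, ∃ δ > (0:ℝ), ∀ C : Set S2, IsPreconnected C →
      (∀ z ∈ C, f z ∈ ball y δ) → ∀ p ∈ C, ∀ q ∈ C, dist p q ≤ ρ := by
    intro y
    obtain ⟨ε, hε, hsep⟩ := exists_sep (hdisc y)
    set r := min (ρ/2) (ε/3) with hrdef
    have hr : 0 < r := lt_min (by linarith) (by linarith)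
    set K := (⋃ x ∈ (hdisc y).toFinset, ball x r)ᶜ with hKdef
    have hKclosed : IsClosed K := (isOpen_biUnion fun x _ => isOpen_ball).isClosed_compl
    have hynot : y ∉ f '' K := by
      rintro ⟨z, hzK, hzy⟩
      have hzf : z ∈ f ⁻¹' {y} := hzy
      exact hzK (mem_biUnion ((hdisc y).mem_toFinset.2 hzf) (mem_ball_self hr))
    have hKim : IsClosed (f '' K) := (hKclosed.isCompact.image hf).isClosed
    obtain ⟨δ, hδ, hb⟩ := Metric.isOpen_iff.1 hKim.isOpen_compl y hynot
    refine ⟨δ, hδ, fun C hC hCsub p hp q hq => ?_⟩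
    have hCsub2 : C ⊆ ⋃ x ∈ (hdisc y).toFinset, ball x r := by
      intro z hz
      by_contra hzb
      exact (hb (hCsub z hz)) (mem_image_of_mem f hzb)
    obtain ⟨x1, hx1, hCone⟩ := subset_single_of_disjoint_opens hC ⟨p, hp⟩
      (hdisc y).toFinset (fun x => ball x r) (fun _ => isOpen_ball)
      (fun i hi j hj hij => by
        rw [Set.disjoint_left]
        intro w hwi hwj
        have h1 := hsep i ((hdisc y).mem_toFinset.1 hi) j ((hdisc y).mem_toFinset.1 hj) hij
        have h2 : dist i j ≤ dist i w + dist w j := dist_triangle _ _ _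
        rw [mem_ball] at hwi hwj
        rw [dist_comm] at hwi
        have : r ≤ ε/3 := min_le_right _ _
        linarith) hCsub2
    have h1 : dist p x1 < r := mem_ball.1 (hCone hp)
    have h2 : dist q x1 < r := mem_ball.1 (hCone hq)
    have h3 : dist p q ≤ dist p x1 + dist x1 q := dist_triangle _ _ _
    rw [dist_comm x1 q] at h3
    have : r ≤ ρ/2 := min_le_left _ _
    linarith
  choose δ hδpos hδ using key
  have : Nonempty S2 := sphere_nonempty'
  obtain ⟨T, hT⟩ := isCompact_univ.elim_finite_subcover (fun y : S2 => ball y (δ y / 2))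
    (fun y => isOpen_ball)
    (fun z _ => mem_iUnion.2 ⟨z, mem_ball_self (by linarith [hδpos z])⟩)
  have hTne : T.Nonempty := by
    obtain ⟨t, ht⟩ := mem_iUnion.1 (hT (mem_univ (Classical.arbitrary S2)))
    obtain ⟨ht', _⟩ := mem_iUnion.1 ht
    exact ⟨t, ht'⟩
  refine ⟨T.inf' hTne (fun y => δ y / 2), ?_, ?_⟩
  · rw [gt_iff_lt, Finset.lt_inf'_iff]
    intro t _
    linarith [hδpos t]
  · intro y C hC hCd p hp q hq
    obtain ⟨t, ht⟩ := mem_iUnion.1 (hT (mem_univ y))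
    obtain ⟨htT, hyt⟩ := mem_iUnion.1 ht
    refine hδ t C hC (fun z hz => ?_) p hp q hq
    have h1 : dist (f z) y ≤ T.inf' hTne (fun y => δ y / 2) := hCd z hz
    have h2 : T.inf' hTne (fun y => δ y / 2) ≤ δ t / 2 := Finset.inf'_le _ htT
    have h3 : dist y t < δ t / 2 := mem_ball.1 hyt
    have := dist_triangle (f z) y t
    rw [mem_ball]
    linarith


private lemma dist_neg_S2 (y : S2) :
    dist (⟨-(y : E3), by rw [mem_sphere_zero_iff_norm, norm_neg]; exact norm_one_of_S2 y⟩ : S2) y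
      = 2 := by
  set yneg : S2 := ⟨-(y : E3), by rw [mem_sphere_zero_iff_norm, norm_neg]; exact norm_one_of_S2 y⟩
  have h2 : dist yneg y ^ 2 = 2 - 2 * ⟪(yneg : E3), (y : E3)⟫ := dist_sq_S2 yneg y
  have h3 : ⟪(yneg : E3), (y : E3)⟫ = -1 := by
    show ⟪-(y : E3), (y : E3)⟫ = -1
    rw [inner_neg_left, real_inner_self_eq_norm_sq, norm_one_of_S2]
    norm_num
  rw [h3] at h2
  have hd : 0 ≤ dist yneg y := dist_nonneg
  have hfac : (dist yneg y - 2) * (dist yneg y + 2) = 0 := by nlinarith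
  rcases mul_eq_zero.1 hfac with h | h
  · linarith
  · linarith

private lemma connS2 : ConnectedSpace S2 := by
  have h : IsConnected (Metric.sphere (0 : EuclideanSpace ℝ (Fin 3)) 1) := by
    apply isConnected_sphere ?_ _ (by norm_num : (0:ℝ) ≤ 1)
    have : Module.rank ℝ (EuclideanSpace ℝ (Fin 3)) = 3 := by
      rw [← Module.finrank_eq_rank, finrank_euclideanSpace_fin]; norm_num
    rw [this]; norm_num
  exact Subtype.connectedSpace h

private lemma key_contra (f : S2 → S2) (hf : Continuous f) (hopen : IsOpenMap f)
    {U V A B : Set S2} {x₀ y : S2} {ρ₁ δuc : ℝ}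
    (hρ₁ : 0 < ρ₁) (hρ4 : 4 * ρ₁ < δuc)
    (huc : ∀ a b : S2, dist a b < δuc → dist (f a) (f b) < 1/2)
    (hUopen : IsOpen U) (hUc_conn : IsPreconnected Uᶜ)
    (hy : y ∈ U) (hUy : ∀ z ∈ U, dist z y ≤ 1/2)
    (hx₀ : x₀ ∈ f ⁻¹' U)
    (hVdef : V = connectedComponentIn (f ⁻¹' U) x₀)
    (hAclosed : IsClosed A) (hBclosed : IsClosed B)
    (hABdisj : A ∩ B = ∅) (hABunion : A ∪ B = Vᶜ)
    (hAne : A.Nonempty) (hBne : B.Nonempty)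
    (hAball : ∀ z ∈ A, dist z x₀ < 2 * ρ₁) : False := by
  haveI : ConnectedSpace S2 := connS2
  haveI : LocallyConnectedSpace S2 :=
    ChartedSpace.locallyConnectedSpace (EuclideanSpace ℝ (Fin 2)) _
  have hfUopen : IsOpen (f ⁻¹' U) := hUopen.preimage hf
  have hVsub : V ⊆ f ⁻¹' U := hVdef ▸ connectedComponentIn_subset _ _
  have hVA : ∀ z, z ∈ V → z ∉ A := fun z hz hza => by
    have : z ∈ Vᶜ := hABunion ▸ Or.inl hza
    exact this hz
  have hVB : ∀ z, z ∈ V → z ∉ B := fun z hz hzb => by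
    have : z ∈ Vᶜ := hABunion ▸ Or.inr hzb
    exact this hz
  set L := V ∪ A with hLdef
  have hL : L = Bᶜ := by
    ext z
    constructor
    · rintro (hz | hz)
      · exact hVB z hz
      · intro hzb
        have hm : z ∈ A ∩ B := ⟨hz, hzb⟩
        rw [hABdisj] at hm
        exact notMem_empty _ hm
    · intro hz
      by_cases hzv : z ∈ V
      · exact Or.inl hzv
      · have : z ∈ A ∪ B := hABunion ▸ hzv
        rcases this with h | h
        · exact Or.inr h
        · exact absurd h hz
  have hLopen : IsOpen L := by rw [hL]; exact hBclosed.isOpen_compl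
  set S := A ∩ f ⁻¹' Uᶜ with hSdef
  have hSA : S ⊆ A := inter_subset_left
  have hSL : f '' S = f '' L ∩ Uᶜ := by
    apply Subset.antisymm
    · rintro w ⟨s, ⟨hsA, hsU⟩, rfl⟩
      exact ⟨mem_image_of_mem f (Or.inr hsA), hsU⟩
    · rintro w ⟨⟨l, hlL, rfl⟩, hwUc⟩
      rcases hlL with hlV | hlA
      · exact absurd (hVsub hlV) hwUc
      · exact ⟨l, ⟨hlA, hwUc⟩, rfl⟩
  -- S is nonempty
  have hSne : S.Nonempty := by
    rcases S.eq_empty_or_nonempty with hS | hS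
    · exfalso
      have hAfU : A ⊆ f ⁻¹' U := by
        intro a ha
        by_contra hfa
        have : a ∈ S := ⟨ha, hfa⟩
        rw [hS] at this
        exact notMem_empty _ this
      have hAopen : IsOpen A := by
        rw [isOpen_iff_forall_mem_open]
        intro a ha
        set W := connectedComponentIn (f ⁻¹' U) a with hWdef
        have hWa : a ∈ W := mem_connectedComponentIn (hAfU ha)
        have hWopen : IsOpen W := hfUopen.connectedComponentIn
        have hWV : W ∩ V = ∅ := by
          by_contra hWVne
          obtain ⟨w, hwW, hwV⟩ := nonempty_iff_ne_empty.2 hWVne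
          have hwW' : w ∈ connectedComponentIn (f ⁻¹' U) a := hwW
          have hwV' : w ∈ connectedComponentIn (f ⁻¹' U) x₀ := by
            rw [hVdef] at hwV; exact hwV
          have h1 := connectedComponentIn_eq hwW'
          have h2 := connectedComponentIn_eq hwV'
          have haV : a ∈ V := by
            rw [hVdef, h2, ← h1]
            exact mem_connectedComponentIn (hAfU ha)
          exact hVA a haV ha
        have hWVc : W ⊆ A ∪ B := by
          rw [hABunion]
          intro w hw
          intro hwv
          have : w ∈ W ∩ V := ⟨hw, hwv⟩
          rw [hWV] at this
          exact notMem_empty _ this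
        have hWA : W ⊆ A := by
          by_contra hWA
          have hWB : (W ∩ B).Nonempty := by
            rcases (W ∩ B).eq_empty_or_nonempty with hWB | hWB
            · exfalso
              apply hWA
              intro w hw
              rcases hWVc hw with h | h
              · exact h
              · exfalso
                have : w ∈ W ∩ B := ⟨hw, h⟩
                rw [hWB] at this
                exact notMem_empty _ this
            · exact hWB
          have := (isPreconnected_closed_iff.1 isPreconnected_connectedComponentIn)
            A B hAclosed hBclosed hWVc ⟨a, hWa, ha⟩ hWB
          obtain ⟨w, _, hw⟩ := this
          rw [hABdisj] at hw
          exact notMem_empty _ hw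
        exact ⟨W, hWA, hWopen, hWa⟩
      have hclopen : IsClopen A := ⟨hAclosed, hAopen⟩
      rcases isClopen_iff.1 hclopen with h | h
      · rw [h] at hAne; exact not_nonempty_empty hAne
      · obtain ⟨b, hb⟩ := hBne
        have : b ∈ A := h ▸ mem_univ b
        have hm : b ∈ A ∩ B := ⟨this, hb⟩
        rw [hABdisj] at hm
        exact notMem_empty _ hm
    · exact hS
  have hScompact : IsCompact S :=
    (hAclosed.inter ((hUopen.isClosed_compl).preimage hf)).isCompact
  have hfSclosed : IsClosed (f '' S) := (hScompact.image hf).isClosed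
  -- Uᶜ ⊆ f '' S
  have hUcsub : Uᶜ ⊆ f '' S := by
    by_contra hsub
    obtain ⟨z, hzUc, hzS⟩ := not_subset.1 hsub
    obtain ⟨s₀, hs₀⟩ := hSne
    have h1 : (Uᶜ ∩ f '' L).Nonempty :=
      ⟨f s₀, hs₀.2, mem_image_of_mem f (Or.inr hs₀.1)⟩
    have h2 : (Uᶜ ∩ (f '' S)ᶜ).Nonempty := ⟨z, hzUc, hzS⟩
    have hcover : Uᶜ ⊆ f '' L ∪ (f '' S)ᶜ := by
      intro w hw
      by_cases hwS : w ∈ f '' S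
      · exact Or.inl (hSL ▸ hwS).1
      · exact Or.inr hwS
    have := hUc_conn (f '' L) (f '' S)ᶜ (hopen L hLopen) hfSclosed.isOpen_compl
      hcover h1 h2
    obtain ⟨w, hwUc, hwL, hwS⟩ := this
    exact hwS (hSL ▸ (⟨hwL, hwUc⟩ : w ∈ f '' L ∩ Uᶜ))
  -- everything in Uᶜ is 1/2-close together
  have hUcsmall : ∀ w₁ ∈ Uᶜ, ∀ w₂ ∈ Uᶜ, dist w₁ w₂ < 1/2 := by
    intro w₁ hw₁ w₂ hw₂
    obtain ⟨s₁, hs₁, rfl⟩ := hUcsub hw₁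
    obtain ⟨s₂, hs₂, rfl⟩ := hUcsub hw₂
    have d₁ : dist s₁ x₀ < 2 * ρ₁ := hAball s₁ (hSA hs₁)
    have d₂ : dist s₂ x₀ < 2 * ρ₁ := hAball s₂ (hSA hs₂)
    have : dist s₁ s₂ < δuc := by
      have := dist_triangle s₁ x₀ s₂
      rw [dist_comm x₀ s₂] at this
      linarith
    exact huc s₁ s₂ this
  -- final connectivity contradiction
  set yneg : S2 := ⟨-(y : E3), by rw [mem_sphere_zero_iff_norm, norm_neg]; exact norm_one_of_S2 y⟩
    with hynegdef
  have hdyneg : dist yneg y = 2 := dist_neg_S2 y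
  have hynegUc : yneg ∈ Uᶜ := by
    intro hyneg
    have := hUy yneg hyneg
    rw [hdyneg] at this
    linarith
  have hcover : (univ : Set S2) ⊆ ball y (3/4) ∪ ball yneg (3/4) := by
    intro z _
    by_cases hz : z ∈ U
    · exact Or.inl (mem_ball.2 (by have := hUy z hz; rw [dist_comm] at this ⊢; linarith))
    · have := hUcsmall z hz yneg hynegUc
      exact Or.inr (mem_ball.2 (by linarith))
  have := isPreconnected_univ (α := S2) (ball y (3/4)) (ball yneg (3/4))
    isOpen_ball isOpen_ball hcover
    ⟨y, mem_univ y, mem_ball_self (by norm_num)⟩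
    ⟨yneg, mem_univ yneg, mem_ball_self (by norm_num)⟩
  obtain ⟨w, _, hw1, hw2⟩ := this
  rw [mem_ball] at hw1 hw2
  have htri : dist yneg y ≤ dist w yneg + dist w y := by
    rw [dist_comm w yneg]
    exact dist_triangle yneg w y
  rw [hdyneg] at htri
  linarith


/-- For a non-constant quasiregular self-map of the sphere `S²` (a continuous, open map with
discrete fibers), there is `η > 0` such that the preimage components of every simply connected
domain `U` of chordal diameter `< η` are simply connected ("simply connected" meaning the
complement in `S²` is connected). Here `S²` carries the chordal metric, i.e. the Euclidean
metric of `ℝ³` restricted to the unit sphere. -/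
theorem stmt4
    (f : (Metric.sphere (0 : EuclideanSpace ℝ (Fin 3)) 1) →
         (Metric.sphere (0 : EuclideanSpace ℝ (Fin 3)) 1))
    (hf : Continuous f) (hopen : IsOpenMap f)
    (hdisc : ∀ y, (f ⁻¹' {y}).Finite)
    (hnc : ¬ ∃ c, ∀ x, f x = c) :
    ∃ η > (0 : ℝ), ∀ U : Set (Metric.sphere (0 : EuclideanSpace ℝ (Fin 3)) 1),
      IsOpen U → IsConnected U → IsConnected Uᶜ → Metric.diam U < η →
      ∀ x ∈ f ⁻¹' U, IsConnected (connectedComponentIn (f ⁻¹' U) x)ᶜ := by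
  haveI : ConnectedSpace S2 := connS2
  haveI : LocallyConnectedSpace S2 :=
    ChartedSpace.locallyConnectedSpace (EuclideanSpace ℝ (Fin 2)) _
  obtain ⟨δuc, hδuc, huc⟩ : ∃ δ > (0:ℝ), ∀ a b : S2, dist a b < δ → dist (f a) (f b) < 1/2 := by
    have h := CompactSpace.uniformContinuous_of_continuous hf
    rw [Metric.uniformContinuous_iff] at h
    obtain ⟨δ, hδ, hd⟩ := h (1/2) (by norm_num)
    exact ⟨δ, hδ, fun a b hab => hd hab⟩
  obtain ⟨ρ₁, hρ₁def⟩ : ∃ r : ℝ, r = min (δuc/5) (1/4) := ⟨_, rfl⟩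
  have hρ₁ : 0 < ρ₁ := by rw [hρ₁def]; exact lt_min (by linarith) (by norm_num)
  have hρ₁4 : ρ₁ ≤ 1/4 := by rw [hρ₁def]; exact min_le_right _ _
  have hρ4 : 4 * ρ₁ < δuc := by
    rcases le_total (δuc/5) (1/4) with h | h
    · rw [hρ₁def, min_eq_left h]; linarith
    · rw [hρ₁def, min_eq_right h]; linarith
  obtain ⟨η₁, hη₁, hstep1⟩ := step1 f hf hdisc hρ₁
  refine ⟨min η₁ (1/2), lt_min hη₁ (by norm_num), ?_⟩
  intro U hUopen hUconn hUcconn hUdiam x₀ hx₀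
  obtain ⟨y, hy⟩ := hUconn.nonempty
  have hbU : Bornology.IsBounded U := (isCompact_univ.isBounded).subset (subset_univ U)
  have hUy : ∀ z ∈ U, dist z y ≤ 1/2 := by
    intro z hz
    have h1 := Metric.dist_le_diam_of_mem hbU hz hy
    have h2 : Metric.diam U < 1/2 := lt_of_lt_of_le hUdiam (min_le_right _ _)
    linarith
  set V := connectedComponentIn (f ⁻¹' U) x₀ with hVdef
  have hVopen : IsOpen V := (hUopen.preimage hf).connectedComponentIn
  have hVd : ∀ p ∈ V, ∀ q ∈ V, dist p q ≤ ρ₁ := by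
    apply hstep1 y V isPreconnected_connectedComponentIn
    intro z hz
    have hzU : f z ∈ U := connectedComponentIn_subset (f ⁻¹' U) x₀ hz
    have h1 := Metric.dist_le_diam_of_mem hbU hzU hy
    have h2 : Metric.diam U < η₁ := lt_of_lt_of_le hUdiam (min_le_left _ _)
    linarith
  have hx₀V : x₀ ∈ V := mem_connectedComponentIn hx₀
  have hVball : ∀ z ∈ V, dist z x₀ ≤ ρ₁ := fun z hz => hVd z hz x₀ hx₀V
  have hCconn := cap_isConnected x₀ (by linarith : (0:ℝ) < 2*ρ₁) (by linarith : 2*ρ₁ ≤ 2)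
  have hCV : {z : S2 | 2*ρ₁ ≤ dist z x₀} ⊆ Vᶜ := by
    intro z hz hzv
    have h1 := hVball z hzv
    have h2 : 2*ρ₁ ≤ dist z x₀ := hz
    linarith
  constructor
  · obtain ⟨z, hz⟩ := hCconn.nonempty
    exact ⟨z, hCV hz⟩
  · by_contra hpc
    rw [IsPreconnected] at hpc
    push_neg at hpc
    obtain ⟨u, v, huo, hvo, hsub, hsu, hsv, hemp⟩ := hpc
    have hempty : Vᶜ ∩ (u ∩ v) = ∅ := hemp
    set A := Vᶜ ∩ vᶜ with hAdef
    set B := Vᶜ ∩ v with hBdef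
    have hAclosed : IsClosed A := hVopen.isClosed_compl.inter hvo.isClosed_compl
    have hBeq : B = Vᶜ ∩ uᶜ := by
      ext z
      constructor
      · rintro ⟨hz1, hz2⟩
        refine ⟨hz1, fun hzu => ?_⟩
        have hm : z ∈ Vᶜ ∩ (u ∩ v) := ⟨hz1, hzu, hz2⟩
        rw [hempty] at hm
        exact notMem_empty _ hm
      · rintro ⟨hz1, hz2⟩
        refine ⟨hz1, ?_⟩
        rcases hsub hz1 with h | h
        · exact absurd h hz2
        · exact h
    have hBclosed : IsClosed B := by
      rw [hBeq]; exact hVopen.isClosed_compl.inter huo.isClosed_compl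
    have hABdisj : A ∩ B = ∅ := by
      ext z
      simp only [hAdef, hBdef, mem_inter_iff, mem_compl_iff, mem_empty_iff_false, iff_false]
      rintro ⟨⟨_, h1⟩, _, h2⟩
      exact h1 h2
    have hABunion : A ∪ B = Vᶜ := by
      ext z
      constructor
      · rintro (⟨h, _⟩ | ⟨h, _⟩) <;> exact h
      · intro hz
        by_cases hzv : z ∈ v
        · exact Or.inr ⟨hz, hzv⟩
        · exact Or.inl ⟨hz, hzv⟩
    have hAne : A.Nonempty := by
      obtain ⟨z, hz1, hz2⟩ := hsu
      refine ⟨z, hz1, fun hzv => ?_⟩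
      have hm : z ∈ Vᶜ ∩ (u ∩ v) := ⟨hz1, hz2, hzv⟩
      rw [hempty] at hm
      exact notMem_empty _ hm
    have hBne : B.Nonempty := hsv
    have hCAB : {z : S2 | 2*ρ₁ ≤ dist z x₀} ⊆ A ∪ B := by rw [hABunion]; exact hCV
    have honeside : {z : S2 | 2*ρ₁ ≤ dist z x₀} ∩ A = ∅ ∨
        {z : S2 | 2*ρ₁ ≤ dist z x₀} ∩ B = ∅ := by
      by_contra hbo
      push_neg at hbo
      obtain ⟨h1, h2⟩ := hbo
      have h1' := h1
      have h2' := h2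
      have := (isPreconnected_closed_iff.1 hCconn.isPreconnected) A B hAclosed hBclosed
        hCAB h1' h2'
      obtain ⟨z, _, hz⟩ := this
      rw [hABdisj] at hz
      exact notMem_empty _ hz
    rcases honeside with hside | hside
    · -- C misses A, so A is inside the small ball: contradiction with A ↦ A
      refine key_contra f hf hopen hρ₁ hρ4 huc hUopen hUcconn.isPreconnected hy hUy hx₀
        hVdef hAclosed hBclosed hABdisj hABunion hAne hBne ?_
      intro z hz
      by_contra hzball
      push_neg at hzball
      have hm : z ∈ {w : S2 | 2*ρ₁ ≤ dist w x₀} ∩ A := ⟨hzball, hz⟩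
      rw [hside] at hm
      exact notMem_empty _ hm
    · -- C misses B: swap roles
      refine key_contra f hf hopen hρ₁ hρ4 huc hUopen hUcconn.isPreconnected hy hUy hx₀
        hVdef hBclosed hAclosed (by rw [inter_comm]; exact hABdisj)
        (by rw [union_comm]; exact hABunion) hBne hAne ?_
      intro z hz
      by_contra hzball
      push_neg at hzball
      have hm : z ∈ {w : S2 | 2*ρ₁ ≤ dist w x₀} ∩ B := ⟨hzball, hz⟩
      rw [hside] at hm
      exact notMem_empty _ hm
end

section
/- Let 0 < δ < 1/14, λ = 2e/δ, and f(z) = λ((z−1)²·|z−1|/δ + 2(z−1) − (z−1)²) for δ ≤ |z−1| ≤ 2δ. Then |f(z)| ≥ λ·|z−1|·(2 − |z−1| − |z−1|²/δ) ≥ 2e(2 − 6δ) ≥ 4 for all z in the annulus δ ≤ |z−1| ≤ 2δ. -/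
/-- For `0 < δ < 1/14`, `λ = 2e/δ`, and the interpolation
`f(z) = λ((z−1)²|z−1|/δ + 2(z−1) − (z−1)²)` on the annulus `δ ≤ |z−1| ≤ 2δ`, one has
`|f(z)| ≥ λ|z−1|(2 − |z−1| − |z−1|²/δ) ≥ 2e(2−6δ) ≥ 4`. -/
theorem stmt9 (δ lam : ℝ) (hδ : 0 < δ) (hδ' : δ < 1 / 14)
    (hlam : lam = 2 * Real.exp 1 / δ)
    (z : ℂ) (h1 : δ ≤ ‖z - 1‖) (h2 : ‖z - 1‖ ≤ 2 * δ)
    (w : ℂ)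
    (hw : w = (lam : ℂ) * ((z - 1) ^ 2 * ((‖z - 1‖ : ℝ) : ℂ) / (δ : ℂ)
      + 2 * (z - 1) - (z - 1) ^ 2)) :
    lam * ‖z - 1‖ *
        (2 - ‖z - 1‖ - ‖z - 1‖ ^ 2 / δ) ≤ ‖w‖ ∧
    2 * Real.exp 1 * (2 - 6 * δ) ≤
      lam * ‖z - 1‖ *
        (2 - ‖z - 1‖ - ‖z - 1‖ ^ 2 / δ) ∧
    (4 : ℝ) ≤ 2 * Real.exp 1 * (2 - 6 * δ) := by
  set u : ℂ := z - 1 with hu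
  set r : ℝ := ‖u‖ with hr
  have hr0 : 0 ≤ r := norm_nonneg u
  have he : (2.7 : ℝ) < Real.exp 1 := by
    have := Real.exp_one_gt_d9; linarith
  have hlam0 : 0 ≤ lam := by
    rw [hlam]; positivity
  -- triangle inequality part
  have habsA : ‖u ^ 2 * ((r : ℝ) : ℂ) / (δ : ℂ)‖ = r ^ 2 * r / δ := by
    rw [norm_div, norm_mul, norm_pow]
    simp [Complex.norm_real, abs_of_nonneg hr0, abs_of_pos hδ, hr]
  have habsB : ‖2 * u‖ = 2 * r := by
    rw [norm_mul]; simp [hr]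
  have habsC : ‖u ^ 2‖ = r ^ 2 := by rw [norm_pow, hr]
  have key : 2 * r - (r ^ 2 + r ^ 2 * r / δ) ≤
      ‖u ^ 2 * ((r : ℝ) : ℂ) / (δ : ℂ) + 2 * u - u ^ 2‖ := by
    have h3 : u ^ 2 * ((r : ℝ) : ℂ) / (δ : ℂ) + 2 * u - u ^ 2
        = 2 * u - (u ^ 2 - u ^ 2 * ((r : ℝ) : ℂ) / (δ : ℂ)) := by ring
    rw [h3]
    have h4 := norm_sub_norm_le (2 * u) (u ^ 2 - u ^ 2 * ((r : ℝ) : ℂ) / (δ : ℂ))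
    have h5 : ‖u ^ 2 - u ^ 2 * ((r : ℝ) : ℂ) / (δ : ℂ)‖
        ≤ r ^ 2 + r ^ 2 * r / δ := by
      calc ‖u ^ 2 - u ^ 2 * ((r : ℝ) : ℂ) / (δ : ℂ)‖
          ≤ ‖u ^ 2‖ + ‖u ^ 2 * ((r : ℝ) : ℂ) / (δ : ℂ)‖ :=
            norm_sub_le _ _
        _ = r ^ 2 + r ^ 2 * r / δ := by rw [habsA, habsC]
    rw [habsB] at h4
    linarith
  have hwabs : ‖w‖ = lam *
      ‖u ^ 2 * ((r : ℝ) : ℂ) / (δ : ℂ) + 2 * u - u ^ 2‖ := by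
    rw [hw, norm_mul, Complex.norm_real, Real.norm_eq_abs, abs_of_nonneg hlam0]
  refine ⟨?_, ?_, ?_⟩
  · rw [hwabs]
    have h6 : lam * (2 * r - (r ^ 2 + r ^ 2 * r / δ)) ≤
        lam * ‖u ^ 2 * ((r : ℝ) : ℂ) / (δ : ℂ) + 2 * u - u ^ 2‖ :=
      mul_le_mul_of_nonneg_left key hlam0
    have h7 : lam * r * (2 - r - r ^ 2 / δ) = lam * (2 * r - (r ^ 2 + r ^ 2 * r / δ)) := by
      field_simp; ring
    rw [h7]; exact h6
  · have hpos : (0:ℝ) < 2 - 6 * δ := by linarith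
    have h8 : 2 * Real.exp 1 ≤ lam * r := by
      rw [hlam]
      rw [div_mul_eq_mul_div, le_div_iff₀ hδ]
      have : 0 ≤ 2 * Real.exp 1 := by positivity
      nlinarith
    have h9 : 2 - 6 * δ ≤ 2 - r - r ^ 2 / δ := by
      have : r ^ 2 / δ ≤ 4 * δ := by
        rw [div_le_iff₀ hδ]; nlinarith
      linarith
    have h10 : 0 ≤ lam * r := mul_nonneg hlam0 hr0
    nlinarith
  · nlinarith
end

section
/- Let K ∈ (1,2), and for n ∈ ℕ let t_{n+1} = t_0·α^{n+1}·exp(−(K^{n+1}−1)/(K−1)) with t_0 = 4e, α = δ/4, 0 < δ < 1/14. Define h(t) = (log(1/t))^{−log 2 / log K}. Then 2^n·h(2t_{n+1}/α) = (K^{−n}(−log(2t_0) − n·log α) + (K − K^{−n})/(K−1))^{−log 2/log K}, and consequently lim_{n→∞} 2^n·h(2t_{n+1}/α) = (K/(K−1))^{−log 2/log K}. -/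
open Filter Real


/-- For `K ∈ (1,2)`, `t_0 = 4e`, `α = δ/4` with `0 < δ < 1/14`,
`t_n = t_0 α^n exp(−(K^n−1)/(K−1))` and the gauge `h(t) = (log(1/t))^{−log 2/log K}`:
`2^n h(2t_{n+1}/α) = (K^{−n}(−log(2t_0) − n log α) + (K − K^{−n})/(K−1))^{−log 2/log K}`
(for `n ≥ 1`, where the argument of `h` lies in `(0,1)`), and consequently
`2^n h(2t_{n+1}/α) → (K/(K−1))^{−log 2/log K}` as `n → ∞`. -/
theorem stmt11 (K δ t0 α : ℝ) (hK1 : 1 < K) (hK2 : K < 2)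
    (hδ : 0 < δ) (hδ' : δ < 1 / 14)
    (ht0 : t0 = 4 * Real.exp 1) (hα : α = δ / 4)
    (t : ℕ → ℝ)
    (ht : ∀ n, t n = t0 * α ^ n * Real.exp (-(K ^ n - 1) / (K - 1)))
    (h : ℝ → ℝ)
    (hh : ∀ x : ℝ, 0 < x → x < 1 →
      h x = (Real.log (1 / x)) ^ (-(Real.log 2) / Real.log K)) :
    (∀ n : ℕ, 1 ≤ n →
      2 ^ n * h (2 * t (n + 1) / α) =
        (K ^ (-(n : ℝ)) * (-(Real.log (2 * t0)) - (n : ℝ) * Real.log α)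
          + (K - K ^ (-(n : ℝ))) / (K - 1)) ^ (-(Real.log 2) / Real.log K)) ∧
    Filter.Tendsto (fun n : ℕ => 2 ^ n * h (2 * t (n + 1) / α)) Filter.atTop
      (nhds ((K / (K - 1)) ^ (-(Real.log 2) / Real.log K))) := by
  have hK0 : (0:ℝ) < K := lt_trans one_pos hK1
  have hK1' : (0:ℝ) < K - 1 := by linarith
  have hlogK : 0 < Real.log K := Real.log_pos hK1
  have hexp1 : Real.exp 1 < 3 := lt_trans Real.exp_one_lt_d9 (by norm_num)
  have hexp1' : 0 < Real.exp 1 := Real.exp_pos 1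
  have ht0pos : 0 < t0 := by rw [ht0]; positivity
  have h2t0 : (0:ℝ) < 2 * t0 := by linarith
  have hα0 : 0 < α := by rw [hα]; linarith
  have hlogα : Real.log α < -Real.log (2 * t0) := by
    rw [← Real.log_inv]
    apply Real.log_lt_log hα0
    rw [hα, ht0, ← one_div, lt_div_iff₀ (by positivity)]
    nlinarith
  -- the exponent
  set e : ℝ := -(Real.log 2) / Real.log K with he
  -- the inner quantity L n
  set L : ℕ → ℝ := fun n => -Real.log (2 * t0) - (n:ℝ) * Real.log α
      + (K ^ (n+1) - 1) / (K - 1) with hL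
  have hLpos : ∀ n : ℕ, 1 ≤ n → 0 < L n := by
    intro n hn
    have h1 : (1:ℝ) ≤ (n:ℝ) := by exact_mod_cast hn
    have hlogα0 : Real.log α < 0 := by
      have h2e : (2:ℝ) < Real.exp 1 := by nlinarith [Real.exp_one_gt_d9]
      have : 0 < Real.log (2*t0) := Real.log_pos (by rw [ht0]; nlinarith)
      linarith
    have h2 : (n:ℝ) * Real.log α ≤ Real.log α := by nlinarith
    have h3 : (0:ℝ) < (K ^ (n+1) - 1) / (K - 1) := by
      have : (1:ℝ) < K ^ (n+1) := one_lt_pow₀ hK1 (Nat.succ_ne_zero n)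
      exact div_pos (by linarith) hK1'
    simp only [hL]
    nlinarith
  -- key computation
  have key : ∀ n : ℕ, 1 ≤ n →
      2 ^ n * h (2 * t (n + 1) / α) =
        (K ^ (-(n : ℝ)) * (-(Real.log (2 * t0)) - (n : ℝ) * Real.log α)
          + (K - K ^ (-(n : ℝ))) / (K - 1)) ^ e := by
    intro n hn
    have hxval : 2 * t (n+1) / α = Real.exp (-(L n)) := by
      rw [ht]
      have hαn : α ^ n = Real.exp ((n:ℝ) * Real.log α) := by
        rw [Real.exp_nat_mul, Real.exp_log hα0]
      have h2t0e : 2 * t0 = Real.exp (Real.log (2*t0)) := (Real.exp_log h2t0).symm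
      have : 2 * (t0 * α ^ (n+1) * Real.exp (-(K ^ (n+1) - 1) / (K - 1))) / α
          = (2 * t0) * α ^ n * Real.exp (-(K ^ (n+1) - 1) / (K - 1)) := by
        rw [pow_succ]; field_simp
      rw [this, hαn, h2t0e, ← Real.exp_add, ← Real.exp_add]
      congr 1
      simp only [hL]
      ring
    have hLn := hLpos n hn
    have hx0 : 0 < 2 * t (n+1) / α := by rw [hxval]; exact Real.exp_pos _
    have hx1 : 2 * t (n+1) / α < 1 := by
      rw [hxval, Real.exp_lt_one_iff]; linarith
    rw [hh _ hx0 hx1, hxval]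
    rw [one_div, Real.log_inv, Real.log_exp, neg_neg]
    -- now : 2^n * (L n) ^ e = (...) ^ e
    have hKn : K ^ (-(n:ℝ)) = ((K:ℝ) ^ n)⁻¹ := by
      rw [Real.rpow_neg hK0.le, Real.rpow_natCast]
    have hKne : (K ^ (-(n:ℝ))) ^ e = ((2:ℝ) ^ n : ℝ) := by
      rw [← Real.rpow_mul hK0.le, Real.rpow_def_of_pos hK0,
        ← Real.rpow_natCast (2:ℝ) n,
        Real.rpow_def_of_pos (by norm_num : (0:ℝ) < 2)]
      congr 1
      field_simp [he]
      rw [he]; field_simp [hlogK.ne']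
    have hsplit : (K ^ (-(n:ℝ)) * L n) ^ e = 2 ^ n * (L n) ^ e := by
      rw [Real.mul_rpow (by positivity) hLn.le, hKne]
    rw [← hsplit]
    congr 1
    have hKpn : (0:ℝ) < K ^ n := by positivity
    rw [hKn]
    simp only [hL]
    field_simp
    ring
  refine ⟨key, ?_⟩
  -- limit part
  have hinv0 : (0:ℝ) ≤ K⁻¹ := by positivity
  have hinv1 : K⁻¹ < 1 := inv_lt_one_of_one_lt₀ hK1
  have h1 : Tendsto (fun n : ℕ => (K⁻¹) ^ n) atTop (nhds 0) :=
    tendsto_pow_atTop_nhds_zero_of_lt_one hinv0 hinv1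
  have h2 : Tendsto (fun n : ℕ => (n:ℝ) * (K⁻¹) ^ n) atTop (nhds 0) :=
    tendsto_self_mul_const_pow_of_lt_one hinv0 hinv1
  have hKneq : ∀ n : ℕ, K ^ (-(n:ℝ)) = (K⁻¹) ^ n := by
    intro n
    rw [Real.rpow_neg hK0.le, Real.rpow_natCast, inv_pow]
  have hinner : Tendsto (fun n : ℕ =>
      K ^ (-(n:ℝ)) * (-(Real.log (2 * t0)) - (n:ℝ) * Real.log α)
        + (K - K ^ (-(n:ℝ))) / (K - 1)) atTop (nhds (K / (K-1))) := by
    have base : Tendsto (fun n : ℕ =>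
        (K⁻¹) ^ n * (-(Real.log (2 * t0))) - Real.log α * ((n:ℝ) * (K⁻¹) ^ n)
          + (K - (K⁻¹) ^ n) / (K - 1)) atTop
        (nhds (0 * (-(Real.log (2 * t0))) - Real.log α * 0 + (K - 0) / (K-1))) := by
      exact ((h1.mul_const _).sub (h2.const_mul _)).add
        (((tendsto_const_nhds (x := K)).sub h1).div_const _)
    have base2 : Tendsto (fun n : ℕ =>
        K ^ (-(n:ℝ)) * (-(Real.log (2 * t0)) - (n:ℝ) * Real.log α)
          + (K - K ^ (-(n:ℝ))) / (K - 1)) atTop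
        (nhds (0 * (-(Real.log (2 * t0))) - Real.log α * 0 + (K - 0) / (K-1))) :=
      base.congr (fun n => by rw [hKneq]; ring)
    have hval : 0 * (-(Real.log (2 * t0))) - Real.log α * 0 + (K - 0) / (K-1)
        = K / (K-1) := by ring
    rwa [hval] at base2
  have hlim : Tendsto (fun n : ℕ =>
      (K ^ (-(n:ℝ)) * (-(Real.log (2 * t0)) - (n:ℝ) * Real.log α)
        + (K - K ^ (-(n:ℝ))) / (K - 1)) ^ e) atTop
      (nhds ((K / (K-1)) ^ e)) := by
    exact hinner.rpow_const (Or.inl (div_ne_zero (ne_of_gt hK0) (ne_of_gt hK1')))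
  apply hlim.congr'
  filter_upwards [eventually_ge_atTop 1] with n hn
  exact (key n hn).symm
end

section
/- Let C ⊂ ℂ be a set such that for every n ∈ ℕ, C can be covered by 2^n balls of radius s_n, where s_n = t_0·α^n·exp(−(K^n−1)/(K−1))·exp(−K^n), with K ∈ (1,2), t_0 = 4e, α = δ/4, 0 < δ < 1/14. Then for the gauge function h(t) = (log(1/t))^{−log 2/log K}, the Hausdorff measure satisfies H_h(C) ≤ (K/(K−1))^{−log 2/log K} < ∞. In particular, C has Hausdorff dimension 0. -/
open MeasureTheory

open Filter Topology in
/-- If `C ⊆ ℂ` can be covered, for every `n`, by `2^n` balls of radius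
`s_n = t_0 α^n exp(−(K^n−1)/(K−1)) exp(−K^n)` (with `K ∈ (1,2)`, `t_0 = 4e`, `α = δ/4`,
`0 < δ < 1/14`), then for the gauge `h(t) = (log(1/t))^{−log 2/log K}` the Hausdorff measure
satisfies `H_h(C) ≤ (K/(K−1))^{−log 2/log K} < ∞`; in particular `C` has Hausdorff
dimension `0`. -/
theorem stmt12 (K δ t0 α : ℝ) (hK1 : 1 < K) (hK2 : K < 2)
    (hδ : 0 < δ) (hδ' : δ < 1 / 14)
    (ht0 : t0 = 4 * Real.exp 1) (hα : α = δ / 4)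
    (s : ℕ → ℝ)
    (hs : ∀ n, s n = t0 * α ^ n * Real.exp (-(K ^ n - 1) / (K - 1)) * Real.exp (-(K ^ n)))
    (C : Set ℂ)
    (hcover : ∀ n : ℕ, ∃ c : Fin (2 ^ n) → ℂ, C ⊆ ⋃ j, Metric.ball (c j) (s n)) :
    Measure.mkMetric
        (fun x : ENNReal =>
          ENNReal.ofReal ((Real.log (1 / x.toReal)) ^ (-(Real.log 2) / Real.log K))) C
      ≤ ENNReal.ofReal ((K / (K - 1)) ^ (-(Real.log 2) / Real.log K)) ∧
    dimH C = 0 := by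
  have hK0 : (0:ℝ) < K := lt_trans one_pos hK1
  have hK1' : (0:ℝ) < K - 1 := by linarith
  have hlogK : 0 < Real.log K := Real.log_pos hK1
  set p : ℝ := Real.log 2 / Real.log K with hpdef
  have hp : 0 < p := div_pos (Real.log_pos one_lt_two) hlogK
  have hpe : -(Real.log 2) / Real.log K = -p := by rw [neg_div]
  have ht0p : 0 < t0 := by rw [ht0]; positivity
  have hα0 : 0 < α := by rw [hα]; positivity
  have hα1 : α < 1 := by rw [hα]; linarith
  have hKn : ∀ n : ℕ, (1:ℝ) ≤ K ^ n := fun n => one_le_pow₀ hK1.le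
  have hspos : ∀ n, 0 < s n := by
    intro n; rw [hs]; positivity
  -- log of 2 * s n
  have hlog2s : ∀ n : ℕ, Real.log (2 * s n)
      = Real.log 2 + Real.log t0 + n * Real.log α - (K ^ n - 1)/(K-1) - K ^ n := by
    intro n
    rw [hs, Real.log_mul two_ne_zero (by positivity),
      Real.log_mul (by positivity) (Real.exp_ne_zero _),
      Real.log_mul (by positivity) (Real.exp_ne_zero _),
      Real.log_mul ht0p.ne' (by positivity), Real.log_exp, Real.log_exp,
      Real.log_pow]
    ring
  -- eventual lower bound on L n = -log (2 s n)
  have hL : ∀ᶠ n in atTop, K ^ n * (K/(K-1)) ≤ -Real.log (2 * s n) := by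
    have hlogα : Real.log α < 0 := Real.log_neg hα0 hα1
    have hml : 0 < -Real.log α := by linarith
    obtain ⟨N, hN⟩ := exists_nat_ge ((1/(K-1) + Real.log 2 + Real.log t0) / (-Real.log α))
    filter_upwards [Filter.eventually_ge_atTop N] with n hn
    have hn' : (N:ℝ) ≤ n := Nat.cast_le.mpr hn
    have hc0 : (1/(K-1) + Real.log 2 + Real.log t0) ≤ (N:ℝ) * (-Real.log α) :=
      (div_le_iff₀ hml).mp hN
    have h1 : (n:ℝ) * Real.log α ≤ -(1/(K-1) + Real.log 2 + Real.log t0) := by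
      nlinarith [mul_le_mul_of_nonneg_right hn' hml.le]
    rw [hlog2s]
    have heq : K ^ n * (K/(K-1)) = K^n + (K^n - 1)/(K-1) + 1/(K-1) := by
      field_simp; ring
    linarith [heq]
  -- choose centers
  choose c hc using hcover
  -- diameter bound for the balls
  have hdiam : ∀ (n : ℕ) (i : Fin (2^n)),
      EMetric.diam (Metric.ball (c n i) (s n)) ≤ ENNReal.ofReal (2 * s n) := by
    intro n i
    rw [← Metric.emetric_ball]
    refine EMetric.diam_ball.trans ?_
    rw [ENNReal.ofReal_mul (by norm_num)]
    gcongr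
    · exact le_of_eq (by norm_num)
  -- tendsto of radii
  have hr0 : Tendsto (fun n => 2 * s n) atTop (𝓝 0) := by
    have hub : Tendsto (fun n : ℕ => 2 * t0 * α ^ n) atTop (𝓝 0) := by
      simpa using (tendsto_pow_atTop_nhds_zero_of_lt_one hα0.le hα1).const_mul (2*t0)
    refine squeeze_zero (fun n => by linarith [hspos n]) (fun n => ?_) hub
    have h1 : Real.exp (-(K ^ n - 1) / (K - 1)) ≤ 1 := by
      rw [Real.exp_le_one_iff]
      apply div_nonpos_of_nonpos_of_nonneg <;> [skip; linarith]
      linarith [hKn n]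
    have h2 : Real.exp (-(K ^ n)) ≤ 1 := by
      rw [Real.exp_le_one_iff]; linarith [hKn n]
    calc 2 * s n = (2*t0*α^n) * (Real.exp (-(K ^ n - 1) / (K - 1)) * Real.exp (-(K ^ n))) := by
          rw [hs]; ring
      _ ≤ (2*t0*α^n) * 1 := by
          refine mul_le_mul_of_nonneg_left ?_ (by positivity)
          exact mul_le_one₀ h1 (Real.exp_pos _).le h2
      _ = 2*t0*α^n := mul_one _
  have hrE : Tendsto (fun n => ENNReal.ofReal (2 * s n)) atTop (𝓝 0) := by
    simpa using ENNReal.tendsto_ofReal hr0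
  have hdiamE : ∀ᶠ n in atTop, ∀ i : Fin (2^n),
      EMetric.diam (Metric.ball (c n i) (s n)) ≤ ENNReal.ofReal (2 * s n) :=
    Filter.Eventually.of_forall fun n => hdiam n
  have hcovE : ∀ᶠ n in atTop, C ⊆ ⋃ i, Metric.ball (c n i) (s n) :=
    Filter.Eventually.of_forall hc
  constructor
  · -- mkMetric bound
    refine le_trans (Measure.mkMetric_le_liminf_sum C (fun n => ENNReal.ofReal (2 * s n))
      hrE (fun n i => Metric.ball (c n i) (s n)) hdiamE hcovE _) ?_
    have hev : ∀ᶠ n in atTop,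
        (∑ i : Fin (2^n), ENNReal.ofReal
          ((Real.log (1 / (EMetric.diam (Metric.ball (c n i) (s n))).toReal))
            ^ (-(Real.log 2) / Real.log K)))
          ≤ ENNReal.ofReal ((K / (K - 1)) ^ (-(Real.log 2) / Real.log K)) := by
      filter_upwards [hL] with n hLn
      set L : ℝ := -Real.log (2 * s n) with hLdef
      have hLpos : 0 < L := lt_of_lt_of_le (mul_pos (pow_pos hK0 n) (div_pos hK0 hK1')) hLn
      have hterm : ∀ i : Fin (2^n),
          ENNReal.ofReal ((Real.log (1 / (EMetric.diam (Metric.ball (c n i) (s n))).toReal))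
            ^ (-(Real.log 2) / Real.log K)) ≤ ENNReal.ofReal (L ^ (-p)) := by
        intro i
        set D := EMetric.diam (Metric.ball (c n i) (s n)) with hD
        have hDt : D.toReal ≤ 2 * s n :=
          ENNReal.toReal_le_of_le_ofReal (by linarith [hspos n]) (hdiam n i)
        rcases eq_or_lt_of_le (ENNReal.toReal_nonneg : 0 ≤ D.toReal) with h0 | h0
        · rw [← h0, div_zero, Real.log_zero, Real.zero_rpow (by rw [hpe]; exact (neg_ne_zero.mpr hp.ne'))]
          simp
        · have hlx : L ≤ Real.log (1 / D.toReal) := by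
            rw [one_div, Real.log_inv]
            have := Real.log_le_log h0 hDt
            linarith
          have hmono : (Real.log (1 / D.toReal)) ^ (-p) ≤ L ^ (-p) :=
            Real.rpow_le_rpow_of_nonpos hLpos hlx (by linarith)
          rw [hpe]
          exact ENNReal.ofReal_le_ofReal hmono
      have hKp : K ^ p = 2 := by
        rw [Real.rpow_def_of_pos hK0,
          show Real.log K * p = Real.log 2 by rw [hpdef]; field_simp,
          Real.exp_log (by norm_num : (0:ℝ) < 2)]
      have h2n : ((2:ℝ))^n = (K^n) ^ p := by
        rw [← Real.rpow_natCast K n, ← Real.rpow_natCast 2 n, ← hKp,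
          ← Real.rpow_mul hK0.le, mul_comm p (n:ℝ), Real.rpow_mul hK0.le]
      have hfrac : K^n / L ≤ (K-1)/K := by
        have hB : (0:ℝ) < K^n * (K/(K-1)) := mul_pos (pow_pos hK0 n) (div_pos hK0 hK1')
        have h1 : K^n / L ≤ K^n / (K^n * (K/(K-1))) :=
          div_le_div_of_nonneg_left (pow_pos hK0 n).le hB hLn
        have h2 : K^n / (K^n * (K/(K-1))) = (K-1)/K := by
          have hKn0 : (K:ℝ)^n ≠ 0 := (pow_pos hK0 n).ne'
          field_simp
        rw [h2] at h1; exact h1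
      have hreal : (2:ℝ)^n * L^(-p) ≤ (K/(K-1))^(-p) := by
        calc (2:ℝ)^n * L^(-p) = (K^n)^p * (L^p)⁻¹ := by
              rw [h2n, Real.rpow_neg hLpos.le]
          _ = (K^n / L)^p := by
              rw [Real.div_rpow (pow_pos hK0 n).le hLpos.le, div_eq_mul_inv]
          _ ≤ ((K-1)/K)^p := Real.rpow_le_rpow (div_nonneg (pow_pos hK0 n).le hLpos.le) hfrac hp.le
          _ = (K/(K-1))^(-p) := by
              rw [← inv_div K (K-1), Real.inv_rpow (div_nonneg hK0.le hK1'.le), ← Real.rpow_neg (div_nonneg hK0.le hK1'.le)]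
      calc (∑ i : Fin (2^n), ENNReal.ofReal
            ((Real.log (1 / (EMetric.diam (Metric.ball (c n i) (s n))).toReal))
              ^ (-(Real.log 2) / Real.log K)))
          ≤ ∑ _i : Fin (2^n), ENNReal.ofReal (L ^ (-p)) :=
            Finset.sum_le_sum fun i _ => hterm i
        _ = ((2^n : ℕ) : ENNReal) * ENNReal.ofReal (L ^ (-p)) := by
            simp [Finset.sum_const, nsmul_eq_mul]
        _ ≤ ENNReal.ofReal ((K / (K - 1)) ^ (-(Real.log 2) / Real.log K)) := by
            rw [← ENNReal.ofReal_natCast, ← ENNReal.ofReal_mul (by positivity), hpe]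
            apply ENNReal.ofReal_le_ofReal
            push_cast
            exact hreal
    calc Filter.liminf (fun n => ∑ i : Fin (2^n), ENNReal.ofReal
            ((Real.log (1 / (EMetric.diam (Metric.ball (c n i) (s n))).toReal))
              ^ (-(Real.log 2) / Real.log K))) atTop
        ≤ Filter.liminf (fun _ => ENNReal.ofReal ((K / (K - 1)) ^ (-(Real.log 2) / Real.log K))) atTop :=
          Filter.liminf_le_liminf hev
      _ = ENNReal.ofReal ((K / (K - 1)) ^ (-(Real.log 2) / Real.log K)) := Filter.liminf_const _
  · -- dimension zero
    refine le_antisymm ?_ zero_le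
    refine ENNReal.le_of_forall_pos_le_add fun ε hε _ => ?_
    rw [zero_add]
    refine le_trans (dimH_le_of_hausdorffMeasure_ne_top (d := ε) ?_) le_rfl
    have hd : (0:ℝ) < (ε:ℝ) := hε
    -- eventually ε K^n dominates n log 2
    have hKbig : ∀ᶠ n : ℕ in atTop, (n:ℝ) * Real.log 2 ≤ (ε:ℝ) * K ^ n := by
      have h1 : Tendsto (fun n : ℕ => (n:ℝ) * Real.log K) atTop atTop :=
        Tendsto.atTop_mul_const hlogK tendsto_natCast_atTop_atTop
      have h2 := (Real.tendsto_exp_div_pow_atTop 1).comp h1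
      have h3 := h2.eventually_ge_atTop (Real.log 2 / ((ε:ℝ) * Real.log K))
      filter_upwards [h3, Filter.eventually_ge_atTop 1] with n hn hn1
      have hn1' : (1:ℝ) ≤ (n:ℝ) := by exact_mod_cast hn1
      have hnl : 0 < (n:ℝ) * Real.log K := by nlinarith
      have hexp : Real.exp ((n:ℝ)*Real.log K) = K ^ n := by
        rw [Real.exp_nat_mul, Real.exp_log hK0]
      simp only [Function.comp, pow_one] at hn
      have h4 : Real.log 2 * ((n:ℝ)*Real.log K)
          ≤ Real.exp ((n:ℝ)*Real.log K) * ((ε:ℝ)*Real.log K) :=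
        (div_le_div_iff₀ (by positivity) hnl).mp hn
      rw [hexp] at h4
      have h5 : ((n:ℝ) * Real.log 2) * Real.log K ≤ ((ε:ℝ) * K^n) * Real.log K := by
        nlinarith
      exact le_of_mul_le_mul_right h5 hlogK
    have hbound : μH[(ε:ℝ)] C ≤ 1 := by
      refine le_trans (Measure.hausdorffMeasure_le_liminf_sum (ε:ℝ) C
        (fun n => ENNReal.ofReal (2 * s n)) hrE
        (fun n i => Metric.ball (c n i) (s n)) hdiamE hcovE) ?_
      have hev1 : ∀ᶠ n in atTop,
          (∑ i : Fin (2^n), EMetric.diam (Metric.ball (c n i) (s n)) ^ (ε:ℝ)) ≤ 1 := by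
        filter_upwards [hL, hKbig] with n hLn hKb
        set L : ℝ := -Real.log (2 * s n) with hLdef
        have hLpos : 0 < L := lt_of_lt_of_le (mul_pos (pow_pos hK0 n) (div_pos hK0 hK1')) hLn
        have hq : (1:ℝ) ≤ K/(K-1) := (one_le_div hK1').mpr (by linarith)
        have hKnL : (K:ℝ)^n ≤ L :=
          le_trans (le_mul_of_one_le_right (pow_pos hK0 n).le hq) hLn
        have hreal : (2:ℝ)^n * (2 * s n)^(ε:ℝ) ≤ 1 := by
          rw [Real.rpow_def_of_pos (by linarith [hspos n] : (0:ℝ) < 2 * s n),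
            show ((2:ℝ))^n = Real.exp ((n:ℝ) * Real.log 2) by
              rw [Real.exp_nat_mul, Real.exp_log (by norm_num : (0:ℝ) < 2)],
            ← Real.exp_add, Real.exp_le_one_iff]
          have h6 : (ε:ℝ) * K^n ≤ (ε:ℝ) * L := mul_le_mul_of_nonneg_left hKnL hd.le
          have h7 : Real.log (2 * s n) = -L := by rw [hLdef]; ring
          rw [h7]
          nlinarith
        calc (∑ i : Fin (2^n), EMetric.diam (Metric.ball (c n i) (s n)) ^ (ε:ℝ))
            ≤ ∑ _i : Fin (2^n), ENNReal.ofReal ((2 * s n)^(ε:ℝ)) := by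
              refine Finset.sum_le_sum fun i _ => ?_
              rw [← ENNReal.ofReal_rpow_of_pos (by linarith [hspos n])]
              exact ENNReal.rpow_le_rpow (hdiam n i) hd.le
          _ = ((2^n : ℕ) : ENNReal) * ENNReal.ofReal ((2 * s n)^(ε:ℝ)) := by
              simp [Finset.sum_const, nsmul_eq_mul]
          _ ≤ 1 := by
              rw [← ENNReal.ofReal_natCast, ← ENNReal.ofReal_mul (by positivity),
                ← ENNReal.ofReal_one]
              apply ENNReal.ofReal_le_ofReal
              push_cast
              exact hreal
      calc Filter.liminf (fun n => ∑ i : Fin (2^n),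
              EMetric.diam (Metric.ball (c n i) (s n)) ^ (ε:ℝ)) atTop
          ≤ Filter.liminf (fun _ => (1:ENNReal)) atTop := Filter.liminf_le_liminf hev1
        _ = 1 := Filter.liminf_const _
    exact ne_top_of_le_ne_top ENNReal.one_ne_top hbound
end

section
/- Let f(z) = λ((z−1)²|z−1|/δ + 2(z−1) − (z−1)²) for δ ≤ |z−1| ≤ 2δ where 0 < δ < 1/14 and λ > 0. Then on this annulus |∂f/∂z̄| ≤ 2λδ and |∂f/∂z| ≥ λ(2 − 14δ), so the Beltrami coefficient satisfies |∂f/∂z̄ / ∂f/∂z| ≤ δ/(1−7δ) < 1. -/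
set_option maxHeartbeats 1000000 in
private lemma stmt17_key (lam δ r : ℝ) (w A B : ℂ) (hδ : (δ:ℂ) ≠ 0) (hr : (r:ℂ) ≠ 0) (hw : w ≠ 0)
    (e1 : A = (lam:ℂ) * ((δ:ℂ)⁻¹ * (w ^ 2 * ((r:ℂ)⁻¹ * ((w + (r:ℂ)^2/w)/2)) + (r:ℂ) * (2*w)) + 2 - 2*w))
    (eI : B = (lam:ℂ) * ((δ:ℂ)⁻¹ * (w ^ 2 * ((r:ℂ)⁻¹ * (((r:ℂ)^2/w - w) * Complex.I / 2)) + (r:ℂ) * (2*w*Complex.I)) + 2*Complex.I - 2*w*Complex.I)) :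
    (A + Complex.I * B)/2 = (lam:ℂ) * w^3/(2*r*δ) ∧
    (A - Complex.I * B)/2 = (lam:ℂ) * (2 - 2*w + 5*w*(r:ℂ)/(2*(δ:ℂ))) := by
  subst e1 eI
  constructor
  · field_simp
    ring_nf
    simp only [Complex.I_sq, pow_succ, pow_zero, one_mul]
    ring_nf
  · field_simp
    ring_nf
    simp only [Complex.I_sq, pow_succ, pow_zero, one_mul]
    ring_nf

private lemma hasFDerivAt_cabs (w : ℂ) (hw : w ≠ 0) :
    HasFDerivAt (fun z : ℂ => (‖z‖ : ℝ)) ((‖w‖)⁻¹ • (innerSL ℝ w)) w := by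
  have hne : (‖w‖ ^ 2 : ℝ) ≠ 0 := pow_ne_zero 2 (norm_ne_zero_iff.mpr hw)
  have h1 : HasFDerivAt (fun x : ℂ => ‖x‖ ^ 2) (2 • (innerSL ℝ w)) w :=
    (hasStrictFDerivAt_norm_sq w).hasFDerivAt
  have h2 := h1.sqrt hne
  have hfun : (fun y : ℂ => Real.sqrt (‖y‖ ^ 2)) = fun y : ℂ => (‖y‖ : ℝ) := by
    funext y; rw [Real.sqrt_sq (norm_nonneg y)]
  rw [hfun] at h2
  convert h2 using 1
  ext v
  have hs : Real.sqrt (‖w‖ ^ 2) = ‖w‖ := Real.sqrt_sq (norm_nonneg w)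
  simp only [ContinuousLinearMap.smul_apply, hs, smul_eq_mul]
  have hnw : ‖w‖ ≠ 0 := norm_ne_zero_iff.mpr hw
  rw [Real.sqrt_sq (norm_nonneg w), smul_comm, ← Nat.cast_smul_eq_nsmul ℝ, smul_smul]
  congr 1
  field_simp
  norm_num

/-- The Wirtinger derivative `∂f/∂z` of a map `f : ℂ → ℂ`, computed from its real
Fréchet derivative. -/
noncomputable def wirtDz (f : ℂ → ℂ) (z : ℂ) : ℂ :=
  (fderiv ℝ f z 1 - Complex.I * fderiv ℝ f z Complex.I) / 2

/-- The Wirtinger derivative `∂f/∂z̄` of a map `f : ℂ → ℂ`. -/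
noncomputable def wirtDzbar (f : ℂ → ℂ) (z : ℂ) : ℂ :=
  (fderiv ℝ f z 1 + Complex.I * fderiv ℝ f z Complex.I) / 2

private lemma stmt17_comp (δ lam : ℝ) (hδ0 : δ ≠ 0) (f : ℂ → ℂ)
    (hf : ∀ z, f z = (lam : ℂ) * ((z - 1) ^ 2 * ((‖z - 1‖ : ℝ) : ℂ) / (δ : ℂ)
      + 2 * (z - 1) - (z - 1) ^ 2)) (z : ℂ) (hz : z - 1 ≠ 0) :
    wirtDzbar f z = (lam : ℂ) * (z-1)^3 / (2 * ((‖z-1‖ : ℝ) : ℂ) * δ) ∧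
    wirtDz f z = (lam : ℂ) * (2 - 2*(z-1) + 5*(z-1)*((‖z-1‖ : ℝ) : ℂ)/(2*(δ:ℂ))) := by
  have hδ : (δ:ℂ) ≠ 0 := Complex.ofReal_ne_zero.mpr hδ0
  set w := z - 1 with hwdef
  set r := ‖w‖ with hrdef
  have hr0 : r ≠ 0 := by simpa [hrdef] using (norm_ne_zero_iff.mpr hz)
  have hw : HasFDerivAt (fun z : ℂ => z - 1) (ContinuousLinearMap.id ℝ ℂ) z := by
    simpa using (hasFDerivAt_id z).sub_const (1:ℂ)
  have habsR : HasFDerivAt (fun z : ℂ => (‖z - 1‖ : ℝ))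
      (((r⁻¹ • innerSL ℝ w).comp (ContinuousLinearMap.id ℝ ℂ))) z :=
    (hasFDerivAt_cabs w hz).comp z hw
  have habs : HasFDerivAt (fun z : ℂ => ((‖z - 1‖ : ℝ) : ℂ))
      (Complex.ofRealCLM.comp ((r⁻¹ • innerSL ℝ w).comp (ContinuousLinearMap.id ℝ ℂ))) z :=
    Complex.ofRealCLM.hasFDerivAt.comp z habsR
  have hsq : HasFDerivAt (fun z : ℂ => (z - 1) ^ 2) ((2 * w) • (1 : ℂ →L[ℝ] ℂ)) z := by
    have := (((hasDerivAt_id z).sub_const (1:ℂ)).pow 2).complexToReal_fderiv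
    simp at this
    exact this
  have h1 := hsq.mul habs
  have h2 := h1.mul_const ((δ : ℂ)⁻¹)
  have h3 : HasFDerivAt (fun z : ℂ => 2 * (z - 1)) ((2:ℂ) • (1 : ℂ →L[ℝ] ℂ)) z := by
    have := (((hasDerivAt_id z).sub_const (1:ℂ)).const_mul (2:ℂ)).complexToReal_fderiv
    simpa using this
  have h4 := ((h2.add h3).sub hsq).const_mul (lam : ℂ)
  have heq : f = fun y => (lam:ℂ) * ((y-1)^2 * ((‖y-1‖ : ℝ):ℂ) * (δ:ℂ)⁻¹
      + 2*(y-1) - (y-1)^2) := by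
    funext y; rw [hf y, div_eq_mul_inv]
  have hD : fderiv ℝ f z = (lam:ℂ) •
      (((δ:ℂ))⁻¹ • ((z - 1) ^ 2 • Complex.ofRealCLM.comp
          ((r⁻¹ • (innerSL ℝ) w).comp (ContinuousLinearMap.id ℝ ℂ)) +
        ((‖z - 1‖ : ℝ) : ℂ) • (2 * w) • (1 : ℂ →L[ℝ] ℂ)) +
        (2:ℂ) • (1 : ℂ →L[ℝ] ℂ) - (2 * w) • (1 : ℂ →L[ℝ] ℂ)) := by
    rw [heq]; exact h4.fderiv
  have e1 := congrArg (fun L => L (1:ℂ)) hD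
  have eI := congrArg (fun L => L Complex.I) hD
  simp only [ContinuousLinearMap.add_apply, ContinuousLinearMap.sub_apply,
    ContinuousLinearMap.smul_apply, ContinuousLinearMap.comp_apply,
    ContinuousLinearMap.coe_smul', Pi.smul_apply, ContinuousLinearMap.one_apply,
    ContinuousLinearMap.id_apply, innerSL_apply_apply, Complex.inner,
    Complex.ofRealCLM_apply, ContinuousLinearMap.smulRight_apply,
    smul_eq_mul, map_one, mul_one, Complex.conj_I] at e1 eI
  clear hD h4 h3 h2 h1 hsq habs habsR hw heq hf
  simp only [Complex.mul_I_re, Complex.I_mul_re, one_mul, Complex.conj_re, Complex.conj_im, neg_neg] at e1 eI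
  push_cast at e1 eI
  simp only [← hwdef, ← hrdef] at e1 eI
  clear_value r w
  have hrC : (r:ℂ) ≠ 0 := Complex.ofReal_ne_zero.mpr hr0
  have hwc : w * (starRingEnd ℂ) w = (r:ℂ)^2 := by
    rw [Complex.mul_conj, Complex.normSq_eq_norm_sq, hrdef]; push_cast; ring
  have hconj : (starRingEnd ℂ) w = (r:ℂ)^2 / w := by
    field_simp at hwc ⊢; linear_combination hwc
  have hre : ((w.re:ℝ):ℂ) = (w + (r:ℂ)^2/w) / 2 := by
    rw [Complex.re_eq_add_conj, hconj]
  have him : ((w.im:ℝ):ℂ) = ((r:ℂ)^2/w - w) * Complex.I / 2 := by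
    rw [Complex.im_eq_sub_conj, hconj]
    rw [div_eq_div_iff (by simp [Complex.I_ne_zero]) (two_ne_zero)]
    ring_nf
    rw [Complex.I_sq]
    ring
  rw [Complex.re_eq_add_conj, hconj] at e1
  rw [Complex.im_eq_sub_conj, hconj] at eI
  have heI : (fderiv ℝ f z) Complex.I = (lam:ℂ) * ((δ:ℂ)⁻¹ * (w ^ 2 * ((r:ℂ)⁻¹ *
      (((r:ℂ)^2/w - w) * Complex.I / 2)) + (r:ℂ) * (2*w*Complex.I)) + 2*Complex.I
      - 2*w*Complex.I) := by
    rw [eI]; field_simp; ring_nf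
    simp only [Complex.I_sq, Complex.inv_I]
    ring_nf
  obtain ⟨hbar, hdz⟩ := stmt17_key lam δ r w _ _ hδ hrC hz e1 heI
  exact ⟨hbar, hdz⟩

/-- For `f(z) = λ((z−1)²|z−1|/δ + 2(z−1) − (z−1)²)` on the annulus `δ ≤ |z−1| ≤ 2δ`
(`0 < δ < 1/14`, `λ > 0`): `|∂f/∂z̄| ≤ 2λδ`, `|∂f/∂z| ≥ λ(2−14δ)`, and hence the Beltrami
coefficient satisfies `|∂f/∂z̄ / ∂f/∂z| ≤ δ/(1−7δ) < 1`. -/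
theorem stmt17 (δ lam : ℝ) (hδ : 0 < δ) (hδ' : δ < 1 / 14) (hlam : 0 < lam)
    (f : ℂ → ℂ)
    (hf : ∀ z, f z = (lam : ℂ) * ((z - 1) ^ 2 * ((‖z - 1‖ : ℝ) : ℂ) / (δ : ℂ)
      + 2 * (z - 1) - (z - 1) ^ 2)) :
    ∀ z : ℂ, δ ≤ ‖z - 1‖ → ‖z - 1‖ ≤ 2 * δ →
      ‖wirtDzbar f z‖ ≤ 2 * lam * δ ∧
      lam * (2 - 14 * δ) ≤ ‖wirtDz f z‖ ∧
      ‖wirtDzbar f z‖ / ‖wirtDz f z‖ ≤ δ / (1 - 7 * δ) ∧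
      δ / (1 - 7 * δ) < 1 := by
  intro z hz1 hz2
  set w := z - 1 with hwdef
  set r := ‖w‖ with hrdef
  have hrpos : 0 < r := lt_of_lt_of_le hδ hz1
  have hwne : w ≠ 0 := norm_pos_iff.mp hrpos
  obtain ⟨hbar, hdz⟩ := stmt17_comp δ lam (ne_of_gt hδ) f hf z hwne
  -- value of |wirtDzbar|
  have habs_bar : ‖wirtDzbar f z‖ = lam * r^2 / (2*δ) := by
    rw [hbar]
    rw [norm_div, norm_mul, norm_pow, norm_mul, norm_mul]
    simp only [Complex.norm_real, Real.norm_eq_abs, Complex.norm_two, ← hwdef, ← hrdef]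
    rw [abs_of_pos hlam, abs_of_pos hδ, abs_of_pos hrpos]
    field_simp
  have hbar_le : ‖wirtDzbar f z‖ ≤ 2 * lam * δ := by
    rw [habs_bar, div_le_iff₀ (by positivity)]
    nlinarith [pow_le_pow_left₀ hrpos.le hz2 2]
  -- lower bound for |wirtDz|
  have hsplit : wirtDz f z = (lam:ℂ) * 2 - (lam:ℂ) * (2*w - 5*w*(r:ℂ)/(2*(δ:ℂ))) := by
    rw [hdz, ← hwdef, ← hrdef]; ring
  have habs2 : ‖(lam:ℂ) * 2‖ = 2 * lam := by
    rw [norm_mul, Complex.norm_two, Complex.norm_real, Real.norm_eq_abs, abs_of_pos hlam]; ring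
  have hrest : ‖(lam:ℂ) * (2*w - 5*w*(r:ℂ)/(2*(δ:ℂ)))‖ ≤ lam * (14 * δ) := by
    rw [norm_mul, Complex.norm_real, Real.norm_eq_abs, abs_of_pos hlam]
    have t1 : ‖2*w - 5*w*(r:ℂ)/(2*(δ:ℂ))‖ ≤
        ‖2*w‖ + ‖5*w*(r:ℂ)/(2*(δ:ℂ))‖ := norm_sub_le _ _
    have t2 : ‖2*w‖ = 2 * r := by
      rw [norm_mul, Complex.norm_two, ← hrdef]
    have t3 : ‖5*w*(r:ℂ)/(2*(δ:ℂ))‖ = 5 * r * r / (2*δ) := by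
      rw [norm_div, norm_mul, norm_mul, norm_mul]
      simp only [Complex.norm_real, Real.norm_eq_abs, Complex.norm_two, ← hrdef]
      rw [abs_of_pos hδ, abs_of_pos hrpos]
      norm_num
    have t4 : 5 * r * r / (2*δ) ≤ 10 * δ := by
      rw [div_le_iff₀ (by positivity)]
      nlinarith
    have t5 : 2 * r ≤ 4 * δ := by linarith
    calc lam * ‖2*w - 5*w*(r:ℂ)/(2*(δ:ℂ))‖
        ≤ lam * (2 * r + 5 * r * r / (2*δ)) := by
          apply mul_le_mul_of_nonneg_left _ hlam.le
          rw [← t2, ← t3]; exact t1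
      _ ≤ lam * (14 * δ) := by
          apply mul_le_mul_of_nonneg_left _ hlam.le
          linarith
  have hdz_lb : lam * (2 - 14 * δ) ≤ ‖wirtDz f z‖ := by
    have := norm_sub_norm_le ((lam:ℂ) * 2) ((lam:ℂ) * (2*w - 5*w*(r:ℂ)/(2*(δ:ℂ))))
    rw [← hsplit, habs2] at this
    nlinarith
  have hdzpos : 0 < ‖wirtDz f z‖ :=
    lt_of_lt_of_le (by nlinarith) hdz_lb
  refine ⟨hbar_le, hdz_lb, ?_, ?_⟩
  · have h1 : ‖wirtDzbar f z‖ / ‖wirtDz f z‖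
        ≤ (2 * lam * δ) / (lam * (2 - 14 * δ)) := by
      apply div_le_div₀ (by positivity) hbar_le (by nlinarith) hdz_lb
    have h2 : (2 * lam * δ) / (lam * (2 - 14 * δ)) = δ / (1 - 7 * δ) := by
      rw [div_eq_div_iff (by nlinarith) (by nlinarith)]
      ring
    rw [h2] at h1; exact h1
  · rw [div_lt_one (by linarith)]; linarith
end
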